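/- Let Λ be an even lattice with disc(Λ) = 3, and let T ↪ Λ be a primitive sublattice with orthogonal complement N such that disc(T) is coprime to 3. Then the discriminant form A_N is isomorphic, as a finite quadratic module, to A_T(−1) ⊕ C₃, where C₃ is a non-degenerate quadratic form on ℤ/3ℤ; consequently O(A_N) ≅ O(A_T) × O(C₃). -/

import Mathlib

set_option maxHeartbeats 1000000


open LinearMap (BilinForm)

/-- `q` is a finite quadratic form: `q(n • x) = n² • q(x)`. -/
def IsQuadratic {A : Type*} [AddCommGroup A] (q : A → AddCircle (2 : ℚ)) : Prop :=
  ∀ (n : ℤ) (x : A), q (n • x) = (n ^ 2) • q x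

/-- Non-degeneracy of the associated bilinear form of a finite quadratic form. -/
def Nondeg {A : Type*} [AddCommGroup A] (q : A → AddCircle (2 : ℚ)) : Prop :=
  ∀ x : A, x ≠ 0 → ∃ y : A, q (x + y) - q x - q y ≠ 0

/-- The isometry group `O(A,q)` of a finite quadratic module, as a subgroup of `AddAut A`. -/
def isometryGroup {A : Type*} [AddCommGroup A] (q : A → AddCircle (2 : ℚ)) :
    Subgroup (Multiplicative (AddAut A)) where
  carrier := {σ | ∀ x : A, q (Multiplicative.toAdd σ x) = q x}
  one_mem' := fun _ => rfl
  mul_mem' := by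
    intro σ τ hσ hτ x
    have : Multiplicative.toAdd (σ * τ) x =
        Multiplicative.toAdd σ (Multiplicative.toAdd τ x) := rfl
    rw [this, hσ, hτ]
  inv_mem' := by
    intro σ hσ x
    have h1 : Multiplicative.toAdd σ (Multiplicative.toAdd σ⁻¹ x) = x :=
      (Multiplicative.toAdd σ).apply_symm_apply x
    have := hσ (Multiplicative.toAdd σ⁻¹ x)
    rw [h1] at this
    exact this.symm

section

variable {V : Type*} [AddCommGroup V] [Module ℚ V]

/-- The dual lattice `W^∨ = {x ∈ span_ℚ(W) : B(x,W) ⊆ ℤ}` of a sublattice `W`. -/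
def dualLat (B : BilinForm ℚ V) (W : Submodule ℤ V) : Submodule ℤ V :=
  B.dualSubmodule W ⊓ Submodule.restrictScalars ℤ (Submodule.span ℚ (W : Set V))

/-- The discriminant group `A_W = W^∨ / W` of a sublattice `W`. -/
abbrev discGroup (B : BilinForm ℚ V) (W : Submodule ℤ V) :=
  ↥(dualLat B W) ⧸ Submodule.comap (dualLat B W).subtype W

end


section
variable {V : Type*} [AddCommGroup V] [Module ℚ V]

lemma mem_dualLat (B : BilinForm ℚ V) (W : Submodule ℤ V) (x : V) :
    x ∈ dualLat B W ↔
      (∀ y ∈ W, ∃ k : ℤ, B x y = (k : ℚ)) ∧ x ∈ Submodule.span ℚ (W : Set V) := by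
  simp only [dualLat, Submodule.mem_inf, Submodule.restrictScalars_mem,
    LinearMap.BilinForm.mem_dualSubmodule, Submodule.mem_one]
  constructor
  · rintro ⟨h1, h2⟩
    exact ⟨fun y hy => by obtain ⟨k, hk⟩ := h1 y hy; exact ⟨k, by exact_mod_cast hk.symm⟩, h2⟩
  · rintro ⟨h1, h2⟩
    exact ⟨fun y hy => by obtain ⟨k, hk⟩ := h1 y hy; exact ⟨k, by exact_mod_cast hk.symm⟩, h2⟩

lemma exists_int_smul_mem {W : Submodule ℤ V} {v : V}
    (hv : v ∈ Submodule.span ℚ (W : Set V)) : ∃ n : ℤ, n ≠ 0 ∧ (n : ℚ) • v ∈ W := by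
  induction hv using Submodule.span_induction with
  | mem x hx => exact ⟨1, one_ne_zero, by simpa using hx⟩
  | zero => exact ⟨1, one_ne_zero, by simp⟩
  | add x y _ _ hx hy =>
      obtain ⟨n, hn, hnx⟩ := hx
      obtain ⟨m, hm, hmy⟩ := hy
      refine ⟨n * m, mul_ne_zero hn hm, ?_⟩
      have : ((n * m : ℤ) : ℚ) • (x + y) = m • ((n:ℚ) • x) + n • ((m:ℚ) • y) := by
        push_cast
        rw [smul_add]
        rw [← Int.cast_smul_eq_zsmul ℚ m ((n:ℚ) • x), ← Int.cast_smul_eq_zsmul ℚ n ((m:ℚ) • y)]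
        rw [smul_smul, smul_smul]
        ring_nf
      rw [this]
      exact W.add_mem (W.smul_mem _ hnx) (W.smul_mem _ hmy)
  | smul q x _ hx =>
      obtain ⟨n, hn, hnx⟩ := hx
      refine ⟨q.den * n, mul_ne_zero (by exact_mod_cast q.den_nz) hn, ?_⟩
      have hqd : (q.den : ℚ) * q = (q.num : ℚ) := by
        rw [mul_comm]; exact_mod_cast Rat.mul_den_eq_num q
      have : ((q.den * n : ℤ) : ℚ) • (q • x) = q.num • ((n:ℚ) • x) := by
        rw [← Int.cast_smul_eq_zsmul ℚ q.num ((n:ℚ) • x), smul_smul, smul_smul]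
        congr 1
        push_cast
        rw [show (q.den:ℚ) * (n:ℚ) * q = ((q.den:ℚ) * q) * (n:ℚ) by ring, hqd]
      rw [this]
      exact W.smul_mem _ hnx

noncomputable def projMap (B : BilinForm ℚ V) (U W : Submodule ℤ V) (p : V →ₗ[ℚ] V)
    (hp : ∀ x : V, x ∈ U → p x ∈ dualLat B W) :
    ↥U →+ discGroup B W where
  toFun x := Submodule.Quotient.mk ⟨p x.1, hp x.1 x.2⟩
  map_zero' := by
    exact (Submodule.Quotient.mk_eq_zero _).mpr (by simp)
  map_add' x y := by
    rw [← Submodule.Quotient.mk_add]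
    congr 1
    exact Subtype.ext (by simp)

@[simp] lemma projMap_apply (B : BilinForm ℚ V) (U W : Submodule ℤ V) (p : V →ₗ[ℚ] V)
    (hp : ∀ x : V, x ∈ U → p x ∈ dualLat B W) (x : ↥U) :
    projMap B U W p hp x = Submodule.Quotient.mk ⟨p x.1, hp x.1 x.2⟩ := rfl

lemma discGroup.mk_eq_zero (B : BilinForm ℚ V) (W : Submodule ℤ V) (x : ↥(dualLat B W)) :
    (Submodule.Quotient.mk x : discGroup B W) = 0 ↔ (x : V) ∈ W := by
  rw [Submodule.Quotient.mk_eq_zero]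
  rfl

lemma discGroup.mk_eq_mk (B : BilinForm ℚ V) (W : Submodule ℤ V) (x y : ↥(dualLat B W)) :
    (Submodule.Quotient.mk x : discGroup B W) = Submodule.Quotient.mk y ↔ ((x : V) - y) ∈ W := by
  rw [Submodule.Quotient.eq]
  rfl

end

instance isometryGroup.coeAddAut {A : Type*} [AddCommGroup A] (q : A → AddCircle (2 : ℚ)) :
    CoeOut ↥(isometryGroup q) (AddAut A) := ⟨fun σ => Multiplicative.toAdd σ.1⟩

lemma torsion_elim {G : Type*} [AddCommGroup G] {m : ℕ} (hc : Nat.Coprime m 3) {x : G}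
    (hm : (m : ℤ) • x = 0) (h3 : (3 : ℤ) • x = 0) : x = 0 := by
  obtain ⟨a, b, hab⟩ := Nat.isCoprime_iff_coprime.mpr hc
  have h3' : ((3:ℕ) : ℤ) = (3 : ℤ) := by norm_num
  calc x = (1 : ℤ) • x := (one_smul _ _).symm
    _ = (a * m + b * 3) • x := by rw [← hab]; norm_num
    _ = a • ((m:ℤ) • x) + b • ((3:ℤ) • x) := by
        rw [add_smul, mul_smul, mul_smul]
    _ = 0 := by rw [hm, h3]; simp

lemma ac_even (r : ℚ) (h : ∃ k : ℤ, r = 2 * k) : (r : AddCircle (2:ℚ)) = 0 := by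
  obtain ⟨k, rfl⟩ := h
  rw [AddCircle.coe_eq_zero_iff]
  exact ⟨k, by rw [zsmul_eq_mul]; push_cast; ring⟩

lemma ac_add (r s : ℚ) : ((r + s : ℚ) : AddCircle (2:ℚ)) = (r : AddCircle (2:ℚ)) + s := rfl

lemma ac_smul (n : ℤ) (r : ℚ) : ((n • r : ℚ) : AddCircle (2:ℚ)) = n • (r : AddCircle (2:ℚ)) := rfl

lemma ac_neg (r : ℚ) : ((-r : ℚ) : AddCircle (2:ℚ)) = -(r : AddCircle (2:ℚ)) := rfl

/-- Let `T` be a primitive sublattice of an even lattice `Λ` (realized inside the rational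
quadratic space `V = Λ ⊗ ℚ`) with `disc(Λ) = 3`, orthogonal complement `N`, and suppose
`disc(T)` is coprime to `3`. Then the discriminant form `A_N` is isomorphic, as a finite
quadratic module, to `A_T(-1) ⊕ C₃` where `C₃` is a non-degenerate quadratic form on
`ℤ/3ℤ`; consequently `O(A_N) ≅ O(A_T) × O(C₃)`.
Here `qT`, `qN` denote the discriminant quadratic forms `x̄ ↦ B(x,x) mod 2ℤ` on `A_T`,
`A_N`, given as data together with their defining property. -/
theorem stmt17 {V : Type*} [AddCommGroup V] [Module ℚ V] [FiniteDimensional ℚ V]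
    (B : BilinForm ℚ V) (hsym : ∀ x y, B x y = B y x) (hnd : B.Nondegenerate)
    (Λ : Submodule ℤ V) (hfull : Submodule.span ℚ (Λ : Set V) = ⊤) (hfg : Λ.FG)
    (hint : ∀ x ∈ Λ, ∀ y ∈ Λ, ∃ k : ℤ, B x y = (k : ℚ))
    (heven : ∀ x ∈ Λ, ∃ k : ℤ, B x x = 2 * (k : ℚ))
    (hdiscΛ : Nat.card (discGroup B Λ) = 3)
    (T : Submodule ℤ V) (hTΛ : T ≤ Λ)
    (hTprim : T = Λ ⊓ Submodule.restrictScalars ℤ (Submodule.span ℚ (T : Set V)))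
    (N : Submodule ℤ V)
    (hN : N = Λ ⊓ Submodule.restrictScalars ℤ (B.orthogonal (Submodule.span ℚ (T : Set V))))
    (hcop : Nat.Coprime (Nat.card (discGroup B T)) 3)
    (qT : discGroup B T → AddCircle (2 : ℚ))
    (hqT : ∀ x : ↥(dualLat B T),
      qT (Submodule.Quotient.mk x) = ((B x x : ℚ) : AddCircle (2 : ℚ)))
    (qN : discGroup B N → AddCircle (2 : ℚ))
    (hqN : ∀ x : ↥(dualLat B N),
      qN (Submodule.Quotient.mk x) = ((B x x : ℚ) : AddCircle (2 : ℚ))) :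
    ∃ C : ZMod 3 → AddCircle (2 : ℚ), IsQuadratic C ∧ Nondeg C ∧
      (∃ σ : discGroup B N ≃+ (discGroup B T × ZMod 3),
        ∀ a : discGroup B N, (- qT (σ a).1) + C (σ a).2 = qN a) ∧
      Nonempty ((isometryGroup qN) ≃* (↥(isometryGroup qT) × ↥(isometryGroup C))) := by
  classical
  set VT : Submodule ℚ V := Submodule.span ℚ (T : Set V) with hVTdef
  set VN : Submodule ℚ V := B.orthogonal VT with hVNdef
  -- basic reflexivity and inclusions
  have hBrefl : B.IsRefl := fun x y h => by rw [hsym]; exact h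
  have hNleΛ : N ≤ Λ := by rw [hN]; exact inf_le_left
  have hLd : Λ ≤ dualLat B Λ := by
    intro x hx
    rw [mem_dualLat]
    exact ⟨fun y hy => hint x hx y hy, by rw [hfull]; trivial⟩
  have hTd : T ≤ dualLat B T := by
    intro x hx
    rw [mem_dualLat]
    exact ⟨fun y hy => hint x (hTΛ hx) y (hTΛ hy), Submodule.subset_span hx⟩
  have hNd : N ≤ dualLat B N := by
    intro x hx
    rw [mem_dualLat]
    exact ⟨fun y hy => hint x (hNleΛ hx) y (hNleΛ hy), Submodule.subset_span hx⟩
  -- finiteness and torsion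
  have hm0 : Nat.card (discGroup B T) ≠ 0 := by
    intro h
    rw [h] at hcop
    simp [Nat.Coprime] at hcop
  haveI hATfin : Finite (discGroup B T) := Nat.finite_of_card_ne_zero hm0
  haveI hAΛfin : Finite (discGroup B Λ) := Nat.finite_of_card_ne_zero (by rw [hdiscΛ]; norm_num)
  have hmA : ∀ a : discGroup B T, ((Nat.card (discGroup B T) : ℤ)) • a = 0 := by
    intro a
    rw [natCast_zsmul]
    exact card_nsmul_eq_zero'
  have h3A : ∀ a : discGroup B Λ, (3 : ℤ) • a = 0 := by
    intro a
    have := card_nsmul_eq_zero' (x := a)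
    rw [hdiscΛ] at this
    rw [show ((3:ℤ)) = ((3:ℕ):ℤ) by norm_num, natCast_zsmul]
    exact this
  -- nondegeneracy of B on VT
  have hndT : (B.restrict VT).Nondegenerate := by
    refine LinearMap.BilinForm.Nondegenerate.ofSeparatingLeft ?_
    intro vv hvv
    by_contra hvne
    have hvne' : vv.1 ≠ 0 := fun h => hvne (Subtype.ext h)
    have hv0 : ∀ u ∈ VT, B vv.1 u = 0 := by
      intro u hu
      have := hvv ⟨u, hu⟩
      simpa using this
    have hscale : ∀ q : ℚ, q • vv.1 ∈ dualLat B T := by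
      intro q
      rw [mem_dualLat]
      constructor
      · intro y hy
        refine ⟨0, ?_⟩
        rw [map_smul, LinearMap.smul_apply, hv0 y (Submodule.subset_span hy)]
        simp
      · exact Submodule.smul_mem _ _ vv.2
    have hT2 : ∀ k : ℕ, ((1:ℚ)/(2^k)) • vv.1 ∈ T := by
      intro k
      have hm0' : ((Nat.card (discGroup B T)) : ℚ) ≠ 0 := by exact_mod_cast hm0
      have h1 : ((1:ℚ)/((Nat.card (discGroup B T)) * 2^k)) • vv.1 ∈ dualLat B T := hscale _
      have h2 := hmA (Submodule.Quotient.mk ⟨_, h1⟩)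
      rw [← Submodule.Quotient.mk_smul, discGroup.mk_eq_zero] at h2
      have h3 : (((Nat.card (discGroup B T) : ℤ) •
          (⟨_, h1⟩ : ↥(dualLat B T)) : ↥(dualLat B T)) : V)
          = ((1:ℚ)/(2^k)) • vv.1 := by
        rw [Submodule.coe_smul, ← Int.cast_smul_eq_zsmul ℚ]
        show ((Nat.card (discGroup B T) : ℤ) : ℚ) •
          (((1:ℚ)/((Nat.card (discGroup B T)) * 2^k)) • vv.1) = _
        rw [smul_smul]
        congr 1
        push_cast
        field_simp
      rwa [h3] at h2
    haveI : IsNoetherian ℤ ↥Λ := isNoetherian_of_fg_of_noetherian Λ hfg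
    have hchainmem : ∀ k : ℕ, ((1:ℚ)/(2^k)) • vv.1 ∈ Λ := fun k => hTΛ (hT2 k)
    set t : ℕ → ↥Λ := fun k => ⟨((1:ℚ)/(2^k)) • vv.1, hchainmem k⟩ with ht
    have hstep : ∀ k, t k = (2:ℤ) • t (k+1) := by
      intro k
      apply Subtype.ext
      rw [Submodule.coe_smul, ← Int.cast_smul_eq_zsmul ℚ]
      show ((1:ℚ)/(2^k)) • vv.1 = ((2:ℤ) : ℚ) • (((1:ℚ)/(2^(k+1))) • vv.1)
      rw [smul_smul]
      congr 1
      push_cast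
      rw [show ((2:ℚ))^(k+1) = 2^k * 2 from pow_succ 2 k]
      field_simp
    have hmono : Monotone (fun k => Submodule.span ℤ {t k}) := by
      apply monotone_nat_of_le_succ
      intro k
      rw [Submodule.span_le]
      intro x hx
      rw [Set.mem_singleton_iff] at hx
      subst hx
      rw [hstep k]
      exact Submodule.smul_mem _ _ (Submodule.subset_span rfl)
    obtain ⟨n, hn⟩ := monotone_stabilizes_iff_noetherian.mpr inferInstance
      ⟨fun k => Submodule.span ℤ {t k}, hmono⟩
    have hn1 := hn (n+1) (Nat.le_succ n)
    have htk : t (n+1) ∈ Submodule.span ℤ {t n} := by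
      have : t (n+1) ∈ Submodule.span ℤ {t (n+1)} := Submodule.subset_span rfl
      rw [show Submodule.span ℤ {t n} = Submodule.span ℤ {t (n+1)} from hn1]
      exact this
    obtain ⟨c, hc⟩ := Submodule.mem_span_singleton.mp htk
    have hcv : ((c:ℚ) * ((1:ℚ)/(2^n))) • vv.1 = ((1:ℚ)/(2^(n+1))) • vv.1 := by
      have h4 := congrArg (fun z : ↥Λ => (z : V)) hc
      simp only [Submodule.coe_smul] at h4
      rw [← Int.cast_smul_eq_zsmul ℚ] at h4
      rw [← smul_smul]
      exact h4
    have h5 : ((c:ℚ) * ((1:ℚ)/(2^n)) - (1:ℚ)/(2^(n+1))) • vv.1 = 0 := by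
      rw [sub_smul, hcv, sub_self]
    rcases smul_eq_zero.mp h5 with h6 | h6
    · have hsube : (c:ℚ) * ((1:ℚ)/(2^n)) = (1:ℚ)/(2^(n+1)) := sub_eq_zero.mp h6
      have h8 : (c:ℚ) * 2 = 1 := by
        have h9 : ((c:ℚ) * 2) * ((1:ℚ)/(2^(n+1))) = (c:ℚ) * ((1:ℚ)/(2^n)) := by
          rw [show ((2:ℚ))^(n+1) = 2^n * 2 from pow_succ 2 n]
          field_simp
        have h9' : ((c:ℚ) * 2) * ((1:ℚ)/(2^(n+1))) = 1 * ((1:ℚ)/(2^(n+1))) := by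
          rw [h9, hsube, one_mul]
        exact mul_right_cancel₀ (by positivity) h9'
      have h10 : (c * 2 : ℤ) = 1 := by exact_mod_cast h8
      omega
    · exact hvne' h6
  have hcompl : IsCompl VT VN :=
    LinearMap.BilinForm.isCompl_orthogonal_of_restrict_nondegenerate hBrefl hndT
  -- projections
  obtain ⟨pT, hpTVT, hpTleft, hpTright⟩ :
      ∃ p : V →ₗ[ℚ] V, (∀ v : V, p v ∈ VT) ∧ (∀ v ∈ VT, p v = v) ∧ (∀ v ∈ VN, p v = 0) := by
    refine ⟨VT.subtype.comp (VT.projectionOnto VN hcompl), fun v => (VT.projectionOnto VN hcompl v).2, ?_, ?_⟩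
    · intro v hv
      have := Submodule.projectionOnto_apply_left hcompl ⟨v, hv⟩
      exact congrArg Subtype.val this
    · intro v hv
      have := Submodule.projectionOnto_apply_right hcompl ⟨v, hv⟩
      exact congrArg Subtype.val this
  have hpN : ∀ v : V, v - pT v ∈ VN := by
    intro v
    have hv : v ∈ VT ⊔ VN := by rw [hcompl.sup_eq_top]; trivial
    obtain ⟨a, ha, b, hb, rfl⟩ := Submodule.mem_sup.mp hv
    have hp : pT (a + b) = a := by rw [map_add, hpTleft a ha, hpTright b hb, add_zero]
    rw [hp]
    simpa using hb
  have hBTN : ∀ u ∈ VT, ∀ w ∈ VN, B u w = 0 := fun u hu w hw => hw u hu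
  obtain ⟨pN, hpNdef⟩ : ∃ p : V →ₗ[ℚ] V, ∀ v, p v = v - pT v :=
    ⟨(LinearMap.id : V →ₗ[ℚ] V) - pT, fun v => rfl⟩
  -- span of N
  have hspanN : Submodule.span ℚ (N : Set V) = VN := by
    apply le_antisymm
    · rw [Submodule.span_le]
      intro n hn
      rw [hN] at hn
      exact (Submodule.mem_inf.mp hn).2
    · intro v hv
      have hvtop : v ∈ Submodule.span ℚ (Λ : Set V) := by rw [hfull]; trivial
      obtain ⟨n, hn0, hnv⟩ := exists_int_smul_mem hvtop
      have hnvN : (n:ℚ) • v ∈ N := by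
        rw [hN]
        exact Submodule.mem_inf.mpr ⟨hnv, Submodule.smul_mem _ _ hv⟩
      have hveq : v = ((n:ℚ)⁻¹) • ((n:ℚ) • v) := by
        rw [smul_smul, inv_mul_cancel₀ (by exact_mod_cast hn0), one_smul]
      rw [hveq]
      exact Submodule.smul_mem _ _ (Submodule.subset_span hnvN)
  have hNVN : ∀ n ∈ N, n ∈ VN := by
    intro n hn
    rw [← hspanN]
    exact Submodule.subset_span hn
  -- projections map dual lattices into dual lattices
  have hpTd : ∀ x : V, x ∈ dualLat B Λ → pT x ∈ dualLat B T := by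
    intro x hx
    rw [mem_dualLat] at hx ⊢
    refine ⟨?_, hpTVT x⟩
    intro t ht
    obtain ⟨k, hk⟩ := hx.1 t (hTΛ ht)
    refine ⟨k, ?_⟩
    have h1 : B x t - B (pT x) t = 0 := by
      have h2 : B (x - pT x) t = B x t - B (pT x) t := by rw [map_sub]; rfl
      rw [← h2, hsym]
      exact hBTN t (Submodule.subset_span ht) _ (hpN x)
    have h3 : B (pT x) t = B x t := by linarith
    rw [h3]; exact hk
  have hpNd : ∀ x : V, x ∈ dualLat B Λ → pN x ∈ dualLat B N := by
    intro x hx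
    rw [mem_dualLat] at hx ⊢
    constructor
    · intro nn hnn
      obtain ⟨k, hk⟩ := hx.1 nn (hNleΛ hnn)
      refine ⟨k, ?_⟩
      have h0 : B (pT x) nn = 0 := hBTN (pT x) (hpTVT x) nn (hNVN nn hnn)
      have h1 : B (pN x) nn = B x nn - B (pT x) nn := by
        rw [hpNdef, map_sub]; rfl
      rw [h1, h0, sub_zero]; exact hk
    · rw [hspanN, hpNdef]; exact hpN x
  have hpTdΛ : ∀ x : V, x ∈ Λ → pT x ∈ dualLat B T := fun x hx => hpTd x (hLd hx)
  have hpNdΛ : ∀ x : V, x ∈ Λ → pN x ∈ dualLat B N := fun x hx => hpNd x (hLd hx)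
  -- the four quotient maps
  obtain ⟨d1, hd1⟩ : ∃ d : ↥(dualLat B Λ) →+ discGroup B T,
      ∀ x, d x = Submodule.Quotient.mk ⟨pT x.1, hpTd x.1 x.2⟩ :=
    ⟨projMap B (dualLat B Λ) T pT hpTd, fun x => rfl⟩
  obtain ⟨d2, hd2⟩ : ∃ d : ↥(dualLat B Λ) →+ discGroup B N,
      ∀ x, d x = Submodule.Quotient.mk ⟨pN x.1, hpNd x.1 x.2⟩ :=
    ⟨projMap B (dualLat B Λ) N pN hpNd, fun x => rfl⟩
  obtain ⟨e1, he1⟩ : ∃ d : ↥Λ →+ discGroup B T,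
      ∀ x, d x = Submodule.Quotient.mk ⟨pT x.1, hpTdΛ x.1 x.2⟩ :=
    ⟨projMap B Λ T pT hpTdΛ, fun x => rfl⟩
  obtain ⟨e2, he2⟩ : ∃ d : ↥Λ →+ discGroup B N,
      ∀ x, d x = Submodule.Quotient.mk ⟨pN x.1, hpNdΛ x.1 x.2⟩ :=
    ⟨projMap B Λ N pN hpNdΛ, fun x => rfl⟩
  -- zero criteria
  have he1z : ∀ x : ↥Λ, e1 x = 0 ↔ pT x.1 ∈ T := by
    intro x; rw [he1, discGroup.mk_eq_zero]
  have he2z : ∀ x : ↥Λ, e2 x = 0 ↔ pN x.1 ∈ N := by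
    intro x; rw [he2, discGroup.mk_eq_zero]
  have hd1z : ∀ x : ↥(dualLat B Λ), d1 x = 0 ↔ pT x.1 ∈ T := by
    intro x; rw [hd1, discGroup.mk_eq_zero]
  have hd2z : ∀ x : ↥(dualLat B Λ), d2 x = 0 ↔ pN x.1 ∈ N := by
    intro x; rw [hd2, discGroup.mk_eq_zero]
  -- kernels agree (primitivity both ways)
  have hker : ∀ x : ↥Λ, (pT x.1 ∈ T ↔ pN x.1 ∈ N) := by
    intro x
    constructor
    · intro h
      rw [hN]
      refine Submodule.mem_inf.mpr ⟨?_, ?_⟩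
      · rw [hpNdef]; exact Submodule.sub_mem _ x.2 (hTΛ h)
      · show pN x.1 ∈ VN
        rw [hpNdef]; exact hpN x.1
    · intro h
      rw [hTprim]
      refine Submodule.mem_inf.mpr ⟨?_, ?_⟩
      · have hpt : pT x.1 = x.1 - pN x.1 := by rw [hpNdef, sub_sub_cancel]
        rw [hpt]
        exact Submodule.sub_mem _ x.2 (hNleΛ h)
      · show pT x.1 ∈ VT
        exact hpTVT x.1
  -- basis of Λ
  haveI : NoZeroSMulDivisors ℤ V := ⟨fun {n v} h => by
    rcases eq_or_ne n 0 with rfl | hn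
    · exact Or.inl rfl
    · right
      have h' : (n:ℚ) • v = 0 := by rw [Int.cast_smul_eq_zsmul]; exact h
      rcases smul_eq_zero.mp h' with h'' | h''
      · exact absurd (by exact_mod_cast h'') hn
      · exact h''⟩
  haveI : Module.Finite ℤ ↥Λ := Module.Finite.iff_fg.mpr hfg
  -- basis of Λ, giving a ℚ-basis of V
  obtain ⟨ι, hιfin, b, vb, hvb, hΛrange, qb, hqbeq⟩ :
      ∃ (ι : Type _) (_ : Finite ι) (b : Module.Basis ι ℤ ↥Λ) (vb : ι → V), (∀ i, vb i = (b i : V)) ∧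
        Submodule.span ℤ (Set.range vb) = Λ ∧
        ∃ qb : Module.Basis ι ℚ V, ⇑qb = vb := by
    set b := Module.Free.chooseBasis ℤ ↥Λ with hbdef
    set vb : Module.Free.ChooseBasisIndex ℤ ↥Λ → V := fun i => ((b i : V)) with hvbdef
    have hΛrange : Submodule.span ℤ (Set.range vb) = Λ := by
      apply le_antisymm
      · rw [Submodule.span_le]
        rintro _ ⟨i, rfl⟩
        exact (b i).2
      · intro x hx
        have hb : (⟨x, hx⟩ : ↥Λ) ∈ Submodule.span ℤ (Set.range b) := by
          rw [b.span_eq]; trivial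
        have hx2 : x ∈ Submodule.map Λ.subtype (Submodule.span ℤ (Set.range b)) :=
          ⟨⟨x, hx⟩, hb, rfl⟩
        rw [Submodule.map_span] at hx2
        have him : Λ.subtype '' Set.range b = Set.range vb := by
          rw [← Set.range_comp]; rfl
        rwa [him] at hx2
    have hℤlin : LinearIndependent ℤ vb :=
      b.linearIndependent.map' Λ.subtype (Submodule.ker_subtype Λ)
    have hqlin : LinearIndependent ℚ vb := (LinearIndependent.iff_fractionRing ℤ ℚ).mp hℤlin
    have hspanb : ⊤ ≤ Submodule.span ℚ (Set.range vb) := by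
      rw [← hfull, Submodule.span_le]
      intro x hx
      have h1 : x ∈ Submodule.span ℤ (Set.range vb) := by rw [hΛrange]; exact hx
      have h2 : Submodule.span ℤ (Set.range vb) ≤
          (Submodule.span ℚ (Set.range vb)).restrictScalars ℤ :=
        Submodule.span_le.mpr (fun y hy => Submodule.subset_span hy)
      exact h2 h1
    exact ⟨_, inferInstance, b, vb, fun i => rfl, hΛrange, Module.Basis.mk hqlin hspanb,
      Module.Basis.coe_mk _ _⟩

  haveI : Finite ι := hιfin
  -- splitting lemma
  have hsplit : ∀ W : Submodule ℤ V, W ≤ Λ →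
      W = Λ ⊓ Submodule.restrictScalars ℤ (Submodule.span ℚ (W : Set V)) →
      ∀ w ∈ dualLat B W, ∃ x ∈ dualLat B Λ, ∀ u ∈ Submodule.span ℚ (W : Set V), B (x - w) u = 0 := by
    intro W hWle hWprim w hw
    rw [mem_dualLat] at hw
    set Wc : Submodule ℤ ↥Λ := W.comap Λ.subtype with hWc
    haveI : NoZeroSMulDivisors ℤ (↥Λ ⧸ Wc) := by
      refine ⟨fun {c q} h => ?_⟩
      rcases eq_or_ne c 0 with rfl | hc
      · exact Or.inl rfl
      right
      obtain ⟨y, rfl⟩ := Submodule.Quotient.mk_surjective _ q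
      rw [← Submodule.Quotient.mk_smul, Submodule.Quotient.mk_eq_zero] at h
      rw [Submodule.Quotient.mk_eq_zero]
      have hcy : (c : ℚ) • (y:V) ∈ W := by
        have h' : ((c • y : ↥Λ) : V) ∈ W := h
        rwa [show ((c • y : ↥Λ) : V) = (c:ℚ) • (y:V) by
          simp [Int.cast_smul_eq_zsmul]] at h'
      show (y:V) ∈ W
      rw [hWprim]
      refine Submodule.mem_inf.mpr ⟨y.2, ?_⟩
      show (y:V) ∈ Submodule.span ℚ (W : Set V)
      have hy : (y:V) = ((c:ℚ)⁻¹) • ((c:ℚ) • (y:V)) := by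
        rw [smul_smul, inv_mul_cancel₀ (by exact_mod_cast hc), one_smul]
      rw [hy]
      exact Submodule.smul_mem _ _ (Submodule.subset_span hcy)
    obtain ⟨sec, hsec⟩ := Module.projective_lifting_property Wc.mkQ
      (LinearMap.id : (↥Λ ⧸ Wc) →ₗ[ℤ] (↥Λ ⧸ Wc)) (Submodule.Quotient.mk_surjective Wc)
    set r : ↥Λ →ₗ[ℤ] V := Λ.subtype.comp (LinearMap.id - sec.comp Wc.mkQ) with hrdef
    have hrval : ∀ x : ↥Λ, r x = (x - sec (Wc.mkQ x) : ↥Λ) := fun x => rfl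
    have hrW : ∀ x : ↥Λ, r x ∈ W := by
      intro x
      have h1 : Wc.mkQ (x - sec (Wc.mkQ x)) = 0 := by
        rw [map_sub]
        have h2 : Wc.mkQ (sec (Wc.mkQ x)) = Wc.mkQ x := LinearMap.congr_fun hsec (Wc.mkQ x)
        rw [h2, sub_self]
      rw [Submodule.mkQ_apply, Submodule.Quotient.mk_eq_zero] at h1
      exact h1
    have hrid : ∀ (x : ↥Λ), (x:V) ∈ W → r x = (x:V) := by
      intro x hx
      have h1 : Wc.mkQ x = 0 := by
        rw [Submodule.mkQ_apply, Submodule.Quotient.mk_eq_zero]; exact hx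
      rw [hrval, h1, map_zero, sub_zero]
    set ℓ : V →ₗ[ℚ] ℚ := qb.constr ℚ (fun i => B w (r (b i))) with hldef
    have hℓΛ : ∀ x : ↥Λ, ℓ (x:V) = B w (r x) := by
      intro x
      have heq : (ℓ.restrictScalars ℤ).comp Λ.subtype = ((B w).restrictScalars ℤ).comp r := by
        apply b.ext
        intro i
        simp only [LinearMap.coe_comp, Function.comp_apply, LinearMap.coe_restrictScalars,
          Submodule.coe_subtype]
        rw [show ((b i : V)) = qb i by rw [hqbeq, hvb i]]
        rw [Module.Basis.constr_basis]
      have := LinearMap.congr_fun heq x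
      simpa using this
    refine ⟨(B.toDual hnd).symm ℓ, ?_, ?_⟩
    · rw [mem_dualLat]
      refine ⟨?_, by rw [hfull]; trivial⟩
      intro y hy
      obtain ⟨k, hk⟩ := hw.1 (r ⟨y, hy⟩) (hrW ⟨y, hy⟩)
      refine ⟨k, ?_⟩
      rw [LinearMap.BilinForm.apply_toDual_symm_apply, hℓΛ ⟨y, hy⟩]
      exact hk
    · intro u hu
      have hker2 : Submodule.span ℚ (W : Set V) ≤
          LinearMap.ker (B ((B.toDual hnd).symm ℓ - w)) := by
        rw [Submodule.span_le]
        intro y hy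
        rw [SetLike.mem_coe, LinearMap.mem_ker]
        have h1 : B ((B.toDual hnd).symm ℓ - w) y = ℓ y - B w y := by
          rw [map_sub, LinearMap.sub_apply, LinearMap.BilinForm.apply_toDual_symm_apply]
        rw [h1, hℓΛ ⟨y, hWle hy⟩, hrid ⟨y, hWle hy⟩ hy, sub_self]
      exact hker2 hu
  -- double duality for Λ
  have hdL : dualLat B Λ = B.dualSubmodule Λ := by
    apply le_antisymm inf_le_left
    intro x hx
    refine Submodule.mem_inf.mpr ⟨hx, ?_⟩
    show x ∈ Submodule.span ℚ (Λ : Set V)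
    rw [hfull]; trivial
  have hflip : B.flip = B := by
    ext x y
    exact hsym y x
  have hdd : ∀ x ∈ dualLat B Λ, (∀ y ∈ dualLat B Λ, ∃ k : ℤ, B x y = (k:ℚ)) → x ∈ Λ := by
    intro x hx hxy
    have key := LinearMap.BilinForm.dualSubmodule_dualSubmodule_flip_of_basis (R := ℤ) B hnd qb
    rw [hflip, hqbeq, hΛrange, ← hdL] at key
    rw [← key]
    intro y hy
    obtain ⟨k, hk⟩ := hxy y hy
    exact Submodule.mem_one.mpr ⟨k, by exact_mod_cast hk.symm⟩
  -- surjectivity of d1 and d2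
  have hd1surj : ∀ a : discGroup B T, ∃ x : ↥(dualLat B Λ), d1 x = a := by
    intro a
    obtain ⟨w, rfl⟩ := Submodule.Quotient.mk_surjective _ a
    obtain ⟨x, hxd, horth⟩ := hsplit T hTΛ hTprim w.1 w.2
    refine ⟨⟨x, hxd⟩, ?_⟩
    rw [hd1]
    congr 1
    apply Subtype.ext
    show pT x = w.1
    have hzVN : x - w.1 ∈ VN := by
      rw [hVNdef, LinearMap.BilinForm.mem_orthogonal_iff]
      intro u hu
      show B u (x - w.1) = 0
      rw [hsym]
      exact horth u hu
    have h1 : pT (x - w.1) = 0 := hpTright _ hzVN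
    have h2 : pT w.1 = w.1 := hpTleft w.1 ((mem_dualLat B T w.1).mp w.2).2
    have h3 : pT x = pT (x - w.1) + pT w.1 := by rw [← map_add, sub_add_cancel]
    rw [h3, h1, h2, zero_add]
  have hd2surj : ∀ a : discGroup B N, ∃ x : ↥(dualLat B Λ), d2 x = a := by
    intro a
    obtain ⟨w, rfl⟩ := Submodule.Quotient.mk_surjective _ a
    have hNprim : N = Λ ⊓ Submodule.restrictScalars ℤ (Submodule.span ℚ (N : Set V)) := by
      rw [hspanN]; exact hN
    obtain ⟨x, hxd, horth⟩ := hsplit N hNleΛ hNprim w.1 w.2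
    refine ⟨⟨x, hxd⟩, ?_⟩
    rw [hd2]
    congr 1
    apply Subtype.ext
    show pN x = w.1
    have hwVN : w.1 ∈ VN := by rw [← hspanN]; exact ((mem_dualLat B N w.1).mp w.2).2
    have hzorth : ∀ u ∈ VN, B (x - w.1) u = 0 := by
      intro u hu
      apply horth
      rw [hspanN]; exact hu
    have hv : pN (x - w.1) = 0 := by
      apply hnd.1 (pN (x - w.1))
      intro u
      rw [hsym]
      have hu2 : u ∈ VT ⊔ VN := by rw [hcompl.sup_eq_top]; trivial
      obtain ⟨p, hp, q', hq', rfl⟩ := Submodule.mem_sup.mp hu2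
      have hmem : pN (x - w.1) ∈ VN := by rw [hpNdef]; exact hpN _
      have hpv : B p (pN (x - w.1)) = 0 := hmem p hp
      have hqv : B q' (pN (x - w.1)) = 0 := by
        have hdecomp : pN (x - w.1) = (x - w.1) - pT (x - w.1) := by rw [hpNdef]
        have h1 : B q' (x - w.1) = 0 := by rw [hsym]; exact hzorth q' hq'
        have h2 : B q' (pT (x - w.1)) = 0 := by
          rw [hsym]
          exact hBTN _ (hpTVT _) q' hq'
        rw [hdecomp, (B q').map_sub, h1, h2, sub_zero]
      have : B (p + q') (pN (x - w.1)) = B p (pN (x - w.1)) + B q' (pN (x - w.1)) := by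
        rw [map_add]; rfl
      rw [this, hpv, hqv, add_zero]
    have h2 : pN w.1 = w.1 := by
      rw [hpNdef]
      rw [hpTright w.1 hwVN, sub_zero]
    have h3 : pN x = pN (x - w.1) + pN w.1 := by rw [← map_add, sub_add_cancel]
    rw [h3, hv, h2, zero_add]
  -- surjectivity of e1 (Bezout trick)
  obtain ⟨a0, b0, hab⟩ := Nat.isCoprime_iff_coprime.mpr hcop
  have hab' : a0 * (Nat.card (discGroup B T) : ℤ) + b0 * 3 = 1 := by exact_mod_cast hab
  have he1surj : ∀ a : discGroup B T, ∃ x : ↥Λ, e1 x = a := by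
    intro a
    obtain ⟨y, hy⟩ := hd1surj a
    have h3y : (((3:ℤ) • y : ↥(dualLat B Λ)) : V) ∈ Λ := by
      have h1 := h3A (Submodule.Quotient.mk y)
      rw [← Submodule.Quotient.mk_smul, discGroup.mk_eq_zero] at h1
      exact h1
    refine ⟨b0 • (⟨(((3:ℤ) • y : ↥(dualLat B Λ)) : V), h3y⟩ : ↥Λ), ?_⟩
    have he1x : e1 (b0 • (⟨(((3:ℤ) • y : ↥(dualLat B Λ)) : V), h3y⟩ : ↥Λ))
        = b0 • ((3:ℤ) • d1 y) := by
      rw [map_zsmul]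
      congr 1
      rw [he1, hd1, ← Submodule.Quotient.mk_smul]
      congr 1
      apply Subtype.ext
      show pT ((((3:ℤ) • y : ↥(dualLat B Λ)) : V))
          = (((3:ℤ) • (⟨pT y.1, hpTd y.1 y.2⟩ : ↥(dualLat B T)) : ↥(dualLat B T)) : V)
      simp only [SetLike.val_smul, map_zsmul]
    rw [he1x, hy]
    have hsplit2 : (a0 * (Nat.card (discGroup B T):ℤ) + b0 * 3) • a = b0 • ((3:ℤ) • a) := by
      rw [add_smul, mul_smul, mul_smul, hmA, smul_zero, zero_add]
    rw [← hsplit2, hab', one_smul]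
  -- the gluing map f
  obtain ⟨f, hfe, hfinj⟩ : ∃ f : discGroup B T →+ discGroup B N,
      (∀ x : ↥Λ, f (e1 x) = e2 x) ∧ Function.Injective f := by
    choose sel hsel using he1surj
    have hwd : ∀ x y : ↥Λ, e1 x = e1 y → e2 x = e2 y := by
      intro x y hxy
      have h1 : e1 (x - y) = 0 := by rw [map_sub, hxy, sub_self]
      rw [he1z] at h1
      have h2 : pN ((x - y : ↥Λ) : V) ∈ N := (hker _).mp h1
      have h3 : e2 (x - y) = 0 := (he2z _).mpr h2
      rw [map_sub] at h3
      exact sub_eq_zero.mp h3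
    have hfe0 : ∀ x : ↥Λ, e2 (sel (e1 x)) = e2 x := fun x => hwd _ _ (hsel _)
    refine ⟨AddMonoidHom.mk' (fun a => e2 (sel a)) ?_, fun x => hfe0 x, ?_⟩
    · intro a c
      show e2 (sel (a + c)) = e2 (sel a) + e2 (sel c)
      have h1 : e1 (sel (a + c)) = e1 (sel a + sel c) := by
        rw [hsel, map_add, hsel, hsel]
      rw [hwd _ _ h1, map_add]
    · intro a c hac
      have hac' : e2 (sel a) = e2 (sel c) := hac
      have h1 : e2 (sel a - sel c) = 0 := by rw [map_sub, hac', sub_self]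
      rw [he2z] at h1
      have h2 := (hker _).mpr h1
      have h3 : e1 (sel a - sel c) = 0 := (he1z _).mpr h2
      rw [map_sub, hsel, hsel] at h3
      exact sub_eq_zero.mp h3
  -- the complement map g
  obtain ⟨g, hg⟩ : ∃ g : ↥(dualLat B Λ) →+ discGroup B N, ∀ x, g x = d2 x - f (d1 x) :=
    ⟨AddMonoidHom.mk' (fun x => d2 x - f (d1 x)) (by
      intro a b
      simp only [map_add]
      abel), fun x => rfl⟩
  have hg0 : ∀ x : ↥(dualLat B Λ), x.1 ∈ Λ → g x = 0 := by
    intro x hx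
    rw [hg]
    have h1 : d1 x = e1 ⟨x.1, hx⟩ := by rw [hd1, he1]
    have h2 : d2 x = e2 ⟨x.1, hx⟩ := by rw [hd2, he2]
    rw [h1, h2, hfe, sub_self]
  have hgx : ∀ x : ↥(dualLat B Λ), g x = 0 → x.1 ∈ Λ := by
    intro x hgx0
    rw [hg, sub_eq_zero] at hgx0
    obtain ⟨lam, hlam⟩ := he1surj (d1 x)
    have h2 : d2 x = e2 lam := by rw [hgx0, ← hlam, hfe]
    have h3 : pT (x.1 - lam.1) ∈ T := by
      have h4 : (Submodule.Quotient.mk ⟨pT lam.1, hpTdΛ _ lam.2⟩ : discGroup B T)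
          = Submodule.Quotient.mk ⟨pT x.1, hpTd _ x.2⟩ := by
        rw [← he1, ← hd1, hlam]
      have h5 := (discGroup.mk_eq_mk B T _ _).mp h4
      have h6 : pT (x.1 - lam.1) = -((pT lam.1) - (pT x.1)) := by
        rw [map_sub, neg_sub]
      rw [h6]
      exact Submodule.neg_mem _ h5
    have h6 : pN (x.1 - lam.1) ∈ N := by
      have h4 : (Submodule.Quotient.mk ⟨pN lam.1, hpNdΛ _ lam.2⟩ : discGroup B N)
          = Submodule.Quotient.mk ⟨pN x.1, hpNd _ x.2⟩ := by
        rw [← he2, ← hd2, h2]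
      have h5 := (discGroup.mk_eq_mk B N _ _).mp h4
      have h7 : pN (x.1 - lam.1) = -((pN lam.1) - (pN x.1)) := by
        rw [map_sub, neg_sub]
      rw [h7]
      exact Submodule.neg_mem _ h5
    have h7 : x.1 - lam.1 = pT (x.1 - lam.1) + pN (x.1 - lam.1) := by
      rw [hpNdef]; abel
    have h8 : x.1 - lam.1 ∈ Λ := by rw [h7]; exact Submodule.add_mem _ (hTΛ h3) (hNleΛ h6)
    have h9 := Submodule.add_mem Λ h8 lam.2
    simpa using h9
  -- generator of the discriminant group of Λ
  obtain ⟨x₀, hx₀gen⟩ : ∃ x₀ : ↥(dualLat B Λ), ∀ a : discGroup B Λ,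
      ∃ c : ℤ, c • (Submodule.Quotient.mk x₀ : discGroup B Λ) = a := by
    haveI : Fact (Nat.Prime 3) := ⟨by norm_num⟩
    haveI hcyc : IsAddCyclic (discGroup B Λ) := isAddCyclic_of_prime_card hdiscΛ
    obtain ⟨gen, hgen⟩ := hcyc.exists_generator
    obtain ⟨x₀, hx₀⟩ := Submodule.Quotient.mk_surjective _ gen
    refine ⟨x₀, fun a => ?_⟩
    obtain ⟨c, hc⟩ := AddSubgroup.mem_zmultiples_iff.mp (hgen a)
    exact ⟨c, by rw [hx₀]; exact hc⟩
  have hΛz : ∀ x : ↥(dualLat B Λ), (Submodule.Quotient.mk x : discGroup B Λ) = 0 ↔ x.1 ∈ Λ :=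
    fun x => discGroup.mk_eq_zero B Λ x
  have hx₀Λ : x₀.1 ∉ Λ := by
    intro hmem
    have h1 : (Submodule.Quotient.mk x₀ : discGroup B Λ) = 0 := (hΛz x₀).mpr hmem
    have h2 : ∀ a : discGroup B Λ, a = 0 := by
      intro a
      obtain ⟨c, hc⟩ := hx₀gen a
      rw [h1, smul_zero] at hc
      exact hc.symm
    have h3 : Nat.card (discGroup B Λ) = 1 := by
      rw [Nat.card_eq_one_iff_unique]
      exact ⟨⟨fun a c => by rw [h2 a, h2 c]⟩, ⟨0⟩⟩
    rw [hdiscΛ] at h3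
    norm_num at h3
  have hgc : ∀ x : ↥(dualLat B Λ), ∃ c : ℤ, x.1 - c • x₀.1 ∈ Λ := by
    intro x
    obtain ⟨c, hc⟩ := hx₀gen (Submodule.Quotient.mk x)
    refine ⟨c, ?_⟩
    rw [← Submodule.Quotient.mk_smul] at hc
    have h1 := (discGroup.mk_eq_mk B Λ _ _).mp hc
    have h2 := Submodule.neg_mem _ h1
    simpa using h2
  have hgmul : ∀ (x : ↥(dualLat B Λ)) (c : ℤ), x.1 - c • x₀.1 ∈ Λ → g x = c • g x₀ := by
    intro x c hmem
    have h1 : g (x - c • x₀) = 0 := hg0 _ (by simpa using hmem)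
    rw [map_sub, map_zsmul, sub_eq_zero] at h1
    exact h1
  -- k₀ and its properties
  have hk₀ne : g x₀ ≠ 0 := fun h0 => hx₀Λ (hgx x₀ h0)
  have h3k₀ : (3:ℤ) • g x₀ = 0 := by
    have h1 := h3A (Submodule.Quotient.mk x₀)
    rw [← Submodule.Quotient.mk_smul, discGroup.mk_eq_zero] at h1
    have h3 := hg0 ((3:ℤ) • x₀) h1
    rw [map_zsmul] at h3
    exact h3
  -- B x₀ x₀ is not an integer
  have hBx₀ : ¬ ∃ k : ℤ, B x₀.1 x₀.1 = (k:ℚ) := by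
    rintro ⟨k, hk⟩
    apply hx₀Λ
    apply hdd x₀.1 x₀.2
    intro y hy
    obtain ⟨c, hc⟩ := hgc ⟨y, hy⟩
    obtain ⟨k2, hk2⟩ := ((mem_dualLat B Λ x₀.1).mp x₀.2).1 _ hc
    refine ⟨c * k + k2, ?_⟩
    have h1 : B x₀.1 y = B x₀.1 (c • x₀.1) + B x₀.1 (y - c • x₀.1) := by
      rw [← map_add]
      congr 1
      abel
    rw [h1, hk2, map_zsmul, hk, zsmul_eq_mul]
    push_cast
    ring
  -- quadratic property of qN
  have hq0 : qN 0 = 0 := by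
    have h := hqN 0
    rw [Submodule.Quotient.mk_zero] at h
    simp only [ZeroMemClass.coe_zero, map_zero, LinearMap.zero_apply] at h
    rw [h]
    exact ac_even 0 ⟨0, by norm_num⟩
  have hQN : ∀ (n : ℤ) (y : discGroup B N), qN (n • y) = (n^2) • qN y := by
    intro n y
    obtain ⟨u, rfl⟩ := Submodule.Quotient.mk_surjective _ y
    rw [← Submodule.Quotient.mk_smul, hqN, hqN]
    have hval : ((n • u : ↥(dualLat B N)) : V) = (n:ℚ) • (u : V) := by
      simp [Int.cast_smul_eq_zsmul]
    have hBval : B ((n • u : ↥(dualLat B N)) : V) ((n • u : ↥(dualLat B N)) : V)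
        = (n^2 : ℤ) • (B u.1 u.1 : ℚ) := by
      rw [hval]
      simp only [map_smul, LinearMap.smul_apply, smul_eq_mul]
      push_cast [zsmul_eq_mul]
      ring
    rw [hBval, ac_smul]
  -- orthogonality of coprime torsion parts
  have horthq : ∀ u w : discGroup B N,
      ((Nat.card (discGroup B T) : ℤ)) • u = 0 → (3:ℤ) • w = 0 → qN (u + w) = qN u + qN w := by
    intro u w hu hw
    obtain ⟨uu, rfl⟩ := Submodule.Quotient.mk_surjective _ u
    obtain ⟨ww, rfl⟩ := Submodule.Quotient.mk_surjective _ w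
    rw [← Submodule.Quotient.mk_smul, discGroup.mk_eq_zero] at hu hw
    have hmB : ∃ k : ℤ, (Nat.card (discGroup B T) : ℚ) * B uu.1 ww.1 = k := by
      obtain ⟨k, hk⟩ := ((mem_dualLat B N ww.1).mp ww.2).1 _ hu
      refine ⟨k, ?_⟩
      have h1 : ((((Nat.card (discGroup B T) : ℤ) • uu : ↥(dualLat B N))) : V)
          = (((Nat.card (discGroup B T) : ℤ) : ℚ)) • uu.1 := by
        rw [SetLike.val_smul, Int.cast_smul_eq_zsmul]
      rw [h1, map_smul, smul_eq_mul] at hk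
      rw [hsym uu.1 ww.1]
      push_cast at hk ⊢
      exact hk
    have h3B : ∃ k : ℤ, (3:ℚ) * B uu.1 ww.1 = k := by
      obtain ⟨k, hk⟩ := ((mem_dualLat B N uu.1).mp uu.2).1 _ hw
      refine ⟨k, ?_⟩
      have h1 : ((((3:ℤ) • ww : ↥(dualLat B N))) : V) = (((3:ℤ):ℚ)) • ww.1 := by
        rw [SetLike.val_smul, Int.cast_smul_eq_zsmul]
      rw [h1, map_smul, smul_eq_mul] at hk
      push_cast at hk ⊢
      exact hk
    obtain ⟨k1, hk1⟩ := hmB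
    obtain ⟨k2, hk2⟩ := h3B
    have hBint : B uu.1 ww.1 = ((a0 * k1 + b0 * k2 : ℤ) : ℚ) := by
      have hq : ((a0 : ℚ) * (Nat.card (discGroup B T) : ℚ) + (b0:ℚ) * 3) = 1 := by
        exact_mod_cast hab'
      calc B uu.1 ww.1
          = ((a0:ℚ) * ((Nat.card (discGroup B T) : ℚ)) + (b0:ℚ)*3) * B uu.1 ww.1 := by
            rw [hq, one_mul]
        _ = (a0:ℚ) * ((Nat.card (discGroup B T) : ℚ) * B uu.1 ww.1)
              + (b0:ℚ) * (3 * B uu.1 ww.1) := by ring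
        _ = ((a0 * k1 + b0 * k2 : ℤ) : ℚ) := by rw [hk1, hk2]; push_cast; ring
    rw [← Submodule.Quotient.mk_add, hqN, hqN, hqN]
    have hexp : B ((uu + ww : ↥(dualLat B N)) : V) ((uu + ww : ↥(dualLat B N)) : V)
        = (B uu.1 uu.1 + B ww.1 ww.1) + 2 * B uu.1 ww.1 := by
      simp only [Submodule.coe_add, map_add, LinearMap.add_apply]
      rw [hsym ww.1 uu.1]
      ring
    rw [hexp, ac_add, ac_add, ac_even (2 * B uu.1 ww.1) ⟨a0 * k1 + b0 * k2, by rw [hBint]⟩, add_zero]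
  -- key isometry property of f
  have hfq : ∀ a : discGroup B T, qN (f a) = - qT a := by
    intro a
    obtain ⟨x, rfl⟩ := he1surj a
    rw [hfe]
    have hsum : qT (e1 x) + qN (e2 x) = 0 := by
      rw [he1, he2, hqT, hqN, ← ac_add]
      apply ac_even
      obtain ⟨k, hk⟩ := heven x.1 x.2
      refine ⟨k, ?_⟩
      have hcross : B (pT x.1) (pN x.1) = 0 :=
        hBTN _ (hpTVT _) _ (by rw [hpNdef]; exact hpN _)
      have hdec : x.1 = pT x.1 + pN x.1 := by rw [hpNdef]; abel
      have hBxx : B x.1 x.1 = B (pT x.1) (pT x.1) + B (pN x.1) (pN x.1)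
          + 2 * B (pT x.1) (pN x.1) := by
        conv_lhs => rw [hdec]
        simp only [map_add, LinearMap.add_apply]
        rw [hsym (pN x.1) (pT x.1)]
        ring
      rw [hBxx, hcross] at hk
      linarith
    exact eq_neg_of_add_eq_zero_right hsum
  have hmP : ∀ a : discGroup B T, ((Nat.card (discGroup B T) : ℤ)) • f a = 0 := by
    intro a
    rw [← map_zsmul, hmA, map_zero]
  -- the map φ : ZMod 3 →+ A_N
  obtain ⟨φ, hφ⟩ : ∃ φ : ZMod 3 →+ discGroup B N, ∀ c : ℤ, φ ((c : ZMod 3)) = c • g x₀ := by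
    refine ⟨ZMod.lift 3 ⟨(zmultiplesHom _) (g x₀), ?_⟩, ?_⟩
    · show ((3:ℕ) : ℤ) • g x₀ = 0
      rw [show (((3:ℕ)) : ℤ) = (3:ℤ) by norm_num]
      exact h3k₀
    · intro c
      rw [ZMod.lift_coe]
      rfl
  have hφ0 : ∀ c : ZMod 3, φ c = 0 → c = 0 := by
    intro c hc
    rcases (by decide : ∀ c : ZMod 3, c = 0 ∨ c = 1 ∨ c = 2) c with h | h | h
    · exact h
    · exfalso
      apply hk₀ne
      have h1 := hφ 1
      rw [show (((1:ℤ)) : ZMod 3) = 1 by decide, one_smul] at h1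
      rw [← h1, ← h]
      exact hc
    · exfalso
      apply hk₀ne
      have h2 := hφ 2
      rw [show (((2:ℤ)) : ZMod 3) = 2 by decide] at h2
      rw [h, h2] at hc
      have h3 : g x₀ = (3:ℤ) • g x₀ - (2:ℤ) • g x₀ := by
        rw [show ((3:ℤ)) = 2 + 1 by norm_num, add_smul, one_smul]
        abel
      rw [h3, h3k₀, hc, sub_zero]
  have hφinj : Function.Injective φ := by
    rw [injective_iff_map_eq_zero]
    exact hφ0
  have h3φ : ∀ c : ZMod 3, (3:ℤ) • φ c = 0 := by
    intro c
    rw [← map_zsmul]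
    have hc3 : (3:ℤ) • c = 0 := by
      rw [zsmul_eq_mul]
      rw [show (((3:ℤ)) : ZMod 3) = 0 by decide, zero_mul]
    rw [hc3, map_zero]
  -- the equivalence Ψ
  obtain ⟨Ψ, hΨ⟩ : ∃ Ψ : discGroup B T × ZMod 3 →+ discGroup B N,
      ∀ p, Ψ p = f p.1 + φ p.2 := ⟨f.coprod φ, fun p => rfl⟩
  have hΨbij : Function.Bijective Ψ := by
    constructor
    · rw [injective_iff_map_eq_zero]
      rintro ⟨a, c⟩ h0
      rw [hΨ] at h0
      have h1 : f a = - φ c := eq_neg_of_add_eq_zero_left h0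
      have h2 : (Nat.card (discGroup B T) : ℤ) • φ c = 0 := by
        have h2' := hmP a
        rw [h1, smul_neg, neg_eq_zero] at h2'
        exact h2'
      have h3 : φ c = 0 := torsion_elim hcop h2 (h3φ c)
      have h4 : c = 0 := hφ0 c h3
      have h5 : f a = 0 := by rw [h1, h3, neg_zero]
      have h6 : a = 0 := hfinj (by rw [h5, map_zero])
      rw [h4, h6]
      rfl
    · intro y
      obtain ⟨x, hx⟩ := hd2surj y
      obtain ⟨c, hcm⟩ := hgc x
      have hgval : g x = c • g x₀ := hgmul x c hcm
      refine ⟨(d1 x, ((c : ZMod 3))), ?_⟩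
      rw [hΨ]
      show f (d1 x) + φ (c : ZMod 3) = y
      rw [hφ c, ← hgval, ← hx, hg]
      abel
  -- the quadratic form C
  have hCq : IsQuadratic (fun c : ZMod 3 => qN (φ c)) := by
    intro n x
    show qN (φ (n • x)) = n^2 • qN (φ x)
    rw [map_zsmul, hQN]
  have hqk₀ : qN (g x₀) = ((B x₀.1 x₀.1 : ℚ) : AddCircle (2:ℚ)) := by
    obtain ⟨lam, hlam⟩ := he1surj (d1 x₀)
    have hmem : pN (x₀.1 - lam.1) ∈ dualLat B N := by
      rw [map_sub]
      exact Submodule.sub_mem _ (hpNd _ x₀.2) (hpNdΛ _ lam.2)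
    have hgval : g x₀ = Submodule.Quotient.mk ⟨pN (x₀.1 - lam.1), hmem⟩ := by
      rw [hg, hd2, ← hlam, hfe, he2, ← Submodule.Quotient.mk_sub]
      congr 1
      apply Subtype.ext
      show pN x₀.1 - pN lam.1 = pN (x₀.1 - lam.1)
      rw [map_sub]
    rw [hgval, hqN]
    have hpTz : pT (x₀.1 - lam.1) ∈ T := by
      have h4 : (Submodule.Quotient.mk ⟨pT lam.1, hpTdΛ _ lam.2⟩ : discGroup B T)
          = Submodule.Quotient.mk ⟨pT x₀.1, hpTd _ x₀.2⟩ := by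
        rw [← he1, ← hd1, hlam]
      have h5 := (discGroup.mk_eq_mk B T _ _).mp h4
      have h6 : pT (x₀.1 - lam.1) = -((pT lam.1) - (pT x₀.1)) := by rw [map_sub, neg_sub]
      rw [h6]
      exact Submodule.neg_mem _ h5
    have hcross : B (pT (x₀.1 - lam.1)) (pN (x₀.1 - lam.1)) = 0 :=
      hBTN _ (hpTVT _) _ (by rw [hpNdef]; exact hpN _)
    have hdec : x₀.1 - lam.1 = pT (x₀.1 - lam.1) + pN (x₀.1 - lam.1) := by
      rw [hpNdef]; abel
    have hBzz : B (x₀.1 - lam.1) (x₀.1 - lam.1)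
        = B (pT (x₀.1 - lam.1)) (pT (x₀.1 - lam.1))
          + B (pN (x₀.1 - lam.1)) (pN (x₀.1 - lam.1))
          + 2 * B (pT (x₀.1 - lam.1)) (pN (x₀.1 - lam.1)) := by
      conv_lhs => rw [hdec]
      simp only [map_add, LinearMap.add_apply]
      rw [hsym (pN (x₀.1 - lam.1)) (pT (x₀.1 - lam.1))]
      ring
    have hBz2 : B (x₀.1 - lam.1) (x₀.1 - lam.1)
        = B x₀.1 x₀.1 - 2 * B x₀.1 lam.1 + B lam.1 lam.1 := by
      simp only [map_sub, LinearMap.sub_apply]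
      rw [hsym lam.1 x₀.1]
      ring
    obtain ⟨kT, hkT⟩ := heven _ (hTΛ hpTz)
    obtain ⟨kL, hkL⟩ := heven _ lam.2
    obtain ⟨kX, hkX⟩ := ((mem_dualLat B Λ x₀.1).mp x₀.2).1 _ lam.2
    have hfinal : B (pN (x₀.1 - lam.1)) (pN (x₀.1 - lam.1))
        = B x₀.1 x₀.1 + 2 * ((- kX + kL - kT : ℤ) : ℚ) := by
      push_cast
      linarith [hBzz, hBz2, hkT, hkL, hkX, hcross]
    rw [hfinal, ac_add, ac_even (2 * ((-kX + kL - kT : ℤ) : ℚ)) ⟨(-kX + kL - kT), rfl⟩, add_zero]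
  have h2q : (2:ℤ) • qN (g x₀) ≠ 0 := by
    rw [hqk₀, ← ac_smul]
    intro hcon
    rw [AddCircle.coe_eq_zero_iff] at hcon
    obtain ⟨n, hn⟩ := hcon
    apply hBx₀
    refine ⟨n, ?_⟩
    rw [zsmul_eq_mul, zsmul_eq_mul] at hn
    have : (n:ℚ) * 2 = 2 * B x₀.1 x₀.1 := hn
    linarith
  have h9q : (9:ℤ) • qN (g x₀) = 0 := by
    have h1 : qN ((3:ℤ) • g x₀) = ((3:ℤ)^2) • qN (g x₀) := hQN 3 (g x₀)
    rw [h3k₀, hq0] at h1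
    rw [show ((9:ℤ)) = (3:ℤ)^2 by norm_num]
    exact h1.symm
  have hφ1 : φ 1 = g x₀ := by
    have h := hφ 1
    rw [show (((1:ℤ)) : ZMod 3) = 1 by decide, one_smul] at h
    exact h
  have hφ2 : φ 2 = (2:ℤ) • g x₀ := by
    have h := hφ 2
    rw [show (((2:ℤ)) : ZMod 3) = 2 by decide] at h
    exact h
  have hCnd : Nondeg (fun c : ZMod 3 => qN (φ c)) := by
    intro x hx
    rcases (by decide : ∀ c : ZMod 3, c = 0 ∨ c = 1 ∨ c = 2) x with h | rfl | rfl
    · exact absurd h hx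
    · refine ⟨1, ?_⟩
      show qN (φ (1+1)) - qN (φ 1) - qN (φ 1) ≠ 0
      rw [show ((1:ZMod 3)+1) = 2 by decide, hφ2, hφ1, hQN]
      intro hcon
      apply h2q
      have hexp : ((2:ℤ)^2) • qN (g x₀) - qN (g x₀) - qN (g x₀) = (2:ℤ) • qN (g x₀) := by
        rw [show ((2:ℤ)^2) = 2 + 1 + 1 by norm_num, add_smul, add_smul, one_smul]
        abel
      rw [hexp] at hcon
      exact hcon
    · refine ⟨2, ?_⟩
      show qN (φ (2+2)) - qN (φ 2) - qN (φ 2) ≠ 0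
      rw [show ((2:ZMod 3)+2) = 1 by decide, hφ1, hφ2, hQN]
      intro hcon
      apply h2q
      have hexp : qN (g x₀) - ((2:ℤ)^2) • qN (g x₀) - ((2:ℤ)^2) • qN (g x₀)
          = (2:ℤ) • qN (g x₀) - (9:ℤ) • qN (g x₀) := by
        rw [show ((2:ℤ)^2) = 4 by norm_num,
          show ((9:ℤ)) • qN (g x₀) = (4:ℤ) • qN (g x₀) + (4:ℤ) • qN (g x₀)
            + (2:ℤ) • qN (g x₀) - qN (g x₀) by
              rw [show ((9:ℤ)) = 4 + 4 + 2 - 1 by norm_num, sub_smul, add_smul, add_smul,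
                one_smul]]
        abel
      rw [hexp, h9q, sub_zero] at hcon
      exact hcon
  -- the master formula
  have hmaster : ∀ p : discGroup B T × ZMod 3, qN (Ψ p) = - qT p.1 + qN (φ p.2) := by
    rintro ⟨a, c⟩
    rw [hΨ]
    show qN (f a + φ c) = - qT a + qN (φ c)
    rw [horthq (f a) (φ c) (hmP a) (h3φ c), hfq]
  -- assemble σ
  let σ : discGroup B N ≃+ discGroup B T × ZMod 3 := (AddEquiv.ofBijective Ψ hΨbij).symm
  have hσ : ∀ a : discGroup B N, Ψ (σ a) = a := fun a => (AddEquiv.ofBijective Ψ hΨbij).apply_symm_apply a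
  have hσsymm : ∀ p, σ (Ψ p) = p := fun p => (AddEquiv.ofBijective Ψ hΨbij).symm_apply_apply p
  refine ⟨fun c => qN (φ c), hCq, hCnd, ⟨σ, ?_⟩, ?_⟩
  · intro a
    have := hmaster (σ a)
    rw [hσ a] at this
    rw [← this]
  · -- isometry groups
    set F : (discGroup B T × ZMod 3) ≃+ discGroup B N := AddEquiv.ofBijective Ψ hΨbij with hF
    have hform : ∀ p : discGroup B T × ZMod 3, qN (F p) = - qT p.1 + qN (φ p.2) :=
      fun p => hmaster p
    have h3Z : ∀ c : ZMod 3, (3:ℤ) • c = 0 := by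
      intro c
      rw [zsmul_eq_mul, show (((3:ℤ)) : ZMod 3) = 0 by decide, zero_mul]
    have hgen2 : ∀ (θ' : (discGroup B T × ZMod 3) ≃+ (discGroup B T × ZMod 3))
        (a : discGroup B T), (θ' (a, 0)).2 = 0 := by
      intro θ' a
      have h0 : ((Nat.card (discGroup B T) : ℤ)) • ((a, (0:ZMod 3)))
          = (0 : discGroup B T × ZMod 3) := by
        have hfst : (((Nat.card (discGroup B T) : ℤ)) • ((a, (0:ZMod 3)))).1
            = (0 : discGroup B T) := hmA a
        have hsnd : (((Nat.card (discGroup B T) : ℤ)) • ((a, (0:ZMod 3)))).2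
            = (0 : ZMod 3) := by
          show ((Nat.card (discGroup B T) : ℤ)) • (0 : ZMod 3) = 0
          exact smul_zero _
        exact Prod.ext hfst hsnd
      have h1 : ((Nat.card (discGroup B T) : ℤ)) • θ' (a, 0) = 0 := by
        rw [← map_zsmul, h0, map_zero]
      have h2 : ((Nat.card (discGroup B T) : ℤ)) • (θ' (a,0)).2 = 0 := congrArg Prod.snd h1
      exact torsion_elim hcop h2 (h3Z _)
    have hgen1 : ∀ (θ' : (discGroup B T × ZMod 3) ≃+ (discGroup B T × ZMod 3))
        (c : ZMod 3), (θ' (0, c)).1 = 0 := by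
      intro θ' c
      have h0 : ((3 : ℤ)) • (((0:discGroup B T), c)) = (0 : discGroup B T × ZMod 3) := by
        have hfst : (((3:ℤ)) • (((0:discGroup B T), c))).1 = (0 : discGroup B T) := smul_zero _
        have hsnd : (((3:ℤ)) • (((0:discGroup B T), c))).2 = (0 : ZMod 3) := h3Z c
        exact Prod.ext hfst hsnd
      have h1 : ((3:ℤ)) • θ' (0, c) = 0 := by
        rw [← map_zsmul, h0, map_zero]
      have h2 : ((3:ℤ)) • (θ' (0,c)).1 = 0 := congrArg Prod.fst h1
      exact torsion_elim hcop (hmA _) h2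
    -- the backward homomorphism
    have hΘval : ∀ (τ : AddAut (discGroup B T)) (υ : AddAut (ZMod 3)) (x : discGroup B N),
        ((F.symm.trans (AddEquiv.prodCongr τ υ)).trans F) x
          = F (τ (F.symm x).1, υ (F.symm x).2) := fun τ υ x => rfl
    have hΘiso : ∀ (τ : AddAut (discGroup B T)) (υ : AddAut (ZMod 3)),
        (∀ a, qT (τ a) = qT a) → (∀ c, qN (φ (υ c)) = qN (φ c)) →
        ∀ x, qN (((F.symm.trans (AddEquiv.prodCongr τ υ)).trans F) x) = qN x := by
      intro τ υ hτ hυ x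
      rw [hΘval, hform, hτ, hυ]
      have h1 : - qT (F.symm x).1 + qN (φ (F.symm x).2) = qN (F (F.symm x)) := (hform _).symm
      rw [h1, F.apply_symm_apply]
    set ΘA : ↥(isometryGroup qT) × ↥(isometryGroup (fun c : ZMod 3 => qN (φ c))) →
        ↥(isometryGroup qN) := fun p =>
      ⟨(F.symm.trans (AddEquiv.prodCongr (p.1 : AddAut (discGroup B T))
          (p.2 : AddAut (ZMod 3)))).trans F,
        fun x => hΘiso _ _ (fun a => p.1.2 a) (fun c => p.2.2 c) x⟩ with hΘA
    have hΘmul : ∀ p q, ΘA (p * q) = ΘA p * ΘA q := by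
      intro p q
      apply Subtype.ext
      apply AddEquiv.ext
      intro x
      show ((F.symm.trans (AddEquiv.prodCongr ((p.1 : AddAut (discGroup B T))
          + (q.1 : AddAut (discGroup B T))) ((p.2 : AddAut (ZMod 3))
          + (q.2 : AddAut (ZMod 3))))).trans F) x
        = (((ΘA p) : AddAut (discGroup B N)) + ((ΘA q) : AddAut (discGroup B N))) x
      rw [AddAut.add_apply]
      show F (((p.1 : AddAut (discGroup B T)) + (q.1 : AddAut (discGroup B T))) (F.symm x).1,
          ((p.2 : AddAut (ZMod 3)) + (q.2 : AddAut (ZMod 3))) (F.symm x).2)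
        = ((ΘA p) : AddAut (discGroup B N)) (F ((q.1 : AddAut (discGroup B T)) (F.symm x).1,
            (q.2 : AddAut (ZMod 3)) (F.symm x).2))
      show _ = ((F.symm.trans (AddEquiv.prodCongr (p.1 : AddAut (discGroup B T))
          (p.2 : AddAut (ZMod 3)))).trans F) _
      rw [hΘval, F.symm_apply_apply]
      rfl
    have hΘinj : Function.Injective ΘA := by
      intro p q hpq
      have hval : ∀ y : discGroup B T × ZMod 3,
          F ((p.1 : AddAut (discGroup B T)) y.1, (p.2 : AddAut (ZMod 3)) y.2)
            = F ((q.1 : AddAut (discGroup B T)) y.1, (q.2 : AddAut (ZMod 3)) y.2) := by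
        intro y
        have h1 := congrArg (fun (t : ↥(isometryGroup qN)) =>
          ((t : AddAut (discGroup B N)) (F y))) hpq
        change ((F.symm.trans (AddEquiv.prodCongr (p.1 : AddAut (discGroup B T))
          (p.2 : AddAut (ZMod 3)))).trans F) (F y) = ((F.symm.trans (AddEquiv.prodCongr
          (q.1 : AddAut (discGroup B T)) (q.2 : AddAut (ZMod 3)))).trans F) (F y) at h1
        rw [hΘval, hΘval, F.symm_apply_apply] at h1
        exact h1
      have hpair : ∀ y : discGroup B T × ZMod 3,
          ((p.1 : AddAut (discGroup B T)) y.1, (p.2 : AddAut (ZMod 3)) y.2)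
            = ((q.1 : AddAut (discGroup B T)) y.1, (q.2 : AddAut (ZMod 3)) y.2) :=
        fun y => F.injective (hval y)
      have hτeq : (p.1 : AddAut (discGroup B T)) = (q.1 : AddAut (discGroup B T)) := by
        apply AddEquiv.ext
        intro a
        exact congrArg Prod.fst (hpair (a, 0))
      have hυeq : (p.2 : AddAut (ZMod 3)) = (q.2 : AddAut (ZMod 3)) := by
        apply AddEquiv.ext
        intro c
        exact congrArg Prod.snd (hpair (0, c))
      have : p = q := by
        apply Prod.ext
        · exact Subtype.ext hτeq
        · exact Subtype.ext hυeq
      exact this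
    have hΘsurj : Function.Surjective ΘA := by
      intro s
      set θ : (discGroup B T × ZMod 3) ≃+ (discGroup B T × ZMod 3) :=
        (F.trans (s : AddAut (discGroup B N))).trans F.symm with hθdef
      set θi : (discGroup B T × ZMod 3) ≃+ (discGroup B T × ZMod 3) :=
        (F.trans ((s⁻¹ : ↥(isometryGroup qN)) : AddAut (discGroup B N))).trans F.symm with hθidef
      have hθ : ∀ y, θ y = F.symm ((s : AddAut (discGroup B N)) (F y)) := fun y => rfl
      have hθi : ∀ y, θi y = F.symm (((s⁻¹ : ↥(isometryGroup qN)) : AddAut (discGroup B N)) (F y)) :=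
        fun y => rfl
      have hsinv1 : ∀ z, ((s⁻¹ : ↥(isometryGroup qN)) : AddAut (discGroup B N))
          ((s : AddAut (discGroup B N)) z) = z := by
        intro z
        have h1 : ((s⁻¹ : ↥(isometryGroup qN)) : AddAut (discGroup B N))
            = -((s : AddAut (discGroup B N))) := rfl
        rw [h1]
        exact ((s : AddAut (discGroup B N))).symm_apply_apply z
      have hsinv2 : ∀ z, ((s : AddAut (discGroup B N)))
          (((s⁻¹ : ↥(isometryGroup qN)) : AddAut (discGroup B N)) z) = z := by
        intro z
        have h1 : ((s⁻¹ : ↥(isometryGroup qN)) : AddAut (discGroup B N))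
            = -((s : AddAut (discGroup B N))) := rfl
        rw [h1]
        exact ((s : AddAut (discGroup B N))).apply_symm_apply z
      have hθiθ : ∀ y, θi (θ y) = y := by
        intro y
        rw [hθ, hθi, F.apply_symm_apply, hsinv1, F.symm_apply_apply]
      have hθθi : ∀ y, θ (θi y) = y := by
        intro y
        rw [hθ, hθi, F.apply_symm_apply, hsinv2, F.symm_apply_apply]
      have hθa : ∀ a : discGroup B T, θ (a, 0) = ((θ (a,0)).1, 0) := by
        intro a
        exact Prod.ext rfl (hgen2 θ a)
      have hθc : ∀ c : ZMod 3, θ (0, c) = (0, (θ (0,c)).2) := by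
        intro c
        exact Prod.ext (hgen1 θ c) rfl
      have hθia : ∀ a : discGroup B T, θi (a, 0) = ((θi (a,0)).1, 0) := by
        intro a
        exact Prod.ext rfl (hgen2 θi a)
      have hθic : ∀ c : ZMod 3, θi (0, c) = (0, (θi (0,c)).2) := by
        intro c
        exact Prod.ext (hgen1 θi c) rfl
      -- τ and its inverse
      have hτli : ∀ a : discGroup B T, (θi ((θ (a,0)).1, 0)).1 = a := by
        intro a
        have h1 := hθiθ (a, 0)
        rw [hθa a] at h1
        exact congrArg Prod.fst h1
      have hτri : ∀ a : discGroup B T, (θ ((θi (a,0)).1, 0)).1 = a := by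
        intro a
        have h1 := hθθi (a, 0)
        rw [hθia a] at h1
        exact congrArg Prod.fst h1
      have hτadd : ∀ a b : discGroup B T, (θ (a + b, 0)).1 = (θ (a,0)).1 + (θ (b,0)).1 := by
        intro a b
        have h1 : ((a + b : discGroup B T), (0:ZMod 3)) = (a, 0) + (b, 0) := by
          exact Prod.ext rfl (by simp)
        rw [h1, map_add]
        rfl
      have hυli : ∀ c : ZMod 3, (θi (0, (θ (0,c)).2)).2 = c := by
        intro c
        have h1 := hθiθ (0, c)
        rw [hθc c] at h1
        exact congrArg Prod.snd h1
      have hυri : ∀ c : ZMod 3, (θ (0, (θi (0,c)).2)).2 = c := by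
        intro c
        have h1 := hθθi (0, c)
        rw [hθic c] at h1
        exact congrArg Prod.snd h1
      have hυadd : ∀ c d : ZMod 3, (θ (0, c + d)).2 = (θ (0,c)).2 + (θ (0,d)).2 := by
        intro c d
        have h1 : ((0 : discGroup B T), c + d) = (0, c) + (0, d) := by
          exact Prod.ext (by simp) rfl
        rw [h1, map_add]
        rfl
      set τA : AddAut (discGroup B T) :=
        { toFun := fun a => (θ (a,0)).1
          invFun := fun a => (θi (a,0)).1
          left_inv := fun a => hτli a
          right_inv := fun a => hτri a
          map_add' := hτadd } with hτA
      set υA : AddAut (ZMod 3) :=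
        { toFun := fun c => (θ (0,c)).2
          invFun := fun c => (θi (0,c)).2
          left_inv := fun c => hυli c
          right_inv := fun c => hυri c
          map_add' := hυadd } with hυA
      -- isometry properties
      have hsiso : ∀ x, qN ((s : AddAut (discGroup B N)) x) = qN x := fun x => s.2 x
      have hτiso : ∀ a, qT (τA a) = qT a := by
        intro a
        have h2 : qN ((s : AddAut (discGroup B N)) (F (a, 0))) = qN (F (a,0)) := hsiso _
        have h3 : (s : AddAut (discGroup B N)) (F (a,0)) = F (θ (a,0)) := by
          rw [hθ, F.apply_symm_apply]
        rw [h3, hθa a] at h2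
        rw [hform, hform] at h2
        have h4 : - qT ((θ (a,0)).1) = - qT a := by
          exact add_right_cancel h2
        have h5 := neg_injective h4
        exact h5
      have hυiso : ∀ c, qN (φ (υA c)) = qN (φ c) := by
        intro c
        have h2 : qN ((s : AddAut (discGroup B N)) (F (0, c))) = qN (F (0,c)) := hsiso _
        have h3 : (s : AddAut (discGroup B N)) (F (0,c)) = F (θ (0,c)) := by
          rw [hθ, F.apply_symm_apply]
        rw [h3, hθc c] at h2
        rw [hform, hform] at h2
        exact add_left_cancel h2
      refine ⟨(⟨τA, fun a => hτiso a⟩, ⟨υA, fun c => hυiso c⟩), ?_⟩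
      apply Subtype.ext
      apply AddEquiv.ext
      intro x
      show ((F.symm.trans (AddEquiv.prodCongr τA υA)).trans F) x
        = (s : AddAut (discGroup B N)) x
      rw [hΘval]
      have h5 : (τA (F.symm x).1, υA (F.symm x).2) = θ (F.symm x) := by
        have h6 : θ (F.symm x) = θ ((F.symm x).1, 0) + θ (0, (F.symm x).2) := by
          rw [← map_add]
          congr 1
          exact Prod.ext (by simp) (by simp)
        rw [h6, hθa, hθc]
        exact (Prod.ext (by simp; rfl) (by simp; rfl)).symm
      rw [h5, hθ, F.apply_symm_apply, F.apply_symm_apply]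
    exact ⟨(MulEquiv.ofBijective (MonoidHom.mk' ΘA hΘmul) ⟨hΘinj, hΘsurj⟩).symm⟩
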